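/- Let M be a CPTP map with Kraus decomposition M(ρ) = Σᵢ Mᵢ ρ Mᵢ†, let ω ∈ ℂ with |ω| = 1, and let A have polar decomposition A = U|A|. Then M(A) = ω A if and only if |A| is a fixed point of M and Mᵢ U |A| = ω U Mᵢ |A| for all i. -/

import Mathlib

open Matrix
open scoped ComplexOrder

noncomputable section

abbrev Mat (d : ℕ) := Matrix (Fin d) (Fin d) ℂ

/-- The positive semidefinite square root (the removed Mathlib `Matrix.PosSemidef.sqrt`,
restated with its old definition). -/
def Matrix.PosSemidef.sqrt {n 𝕜 : Type*} [Fintype n] [DecidableEq n] [RCLike 𝕜]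
    {A : Matrix n n 𝕜} (hA : A.PosSemidef) : Matrix n n 𝕜 :=
  hA.1.eigenvectorUnitary.1 * diagonal ((↑) ∘ (√·) ∘ hA.1.eigenvalues) *
  (star hA.1.eigenvectorUnitary : Matrix n n 𝕜)

lemma psd_sqrt_posSemidef {n 𝕜 : Type*} [Fintype n] [DecidableEq n] [RCLike 𝕜]
    {A : Matrix n n 𝕜} (hA : A.PosSemidef) : hA.sqrt.PosSemidef := by
  unfold Matrix.PosSemidef.sqrt
  have hD : (diagonal ((RCLike.ofReal : ℝ → 𝕜) ∘ (√·) ∘ hA.1.eigenvalues)).PosSemidef :=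
    posSemidef_diagonal_iff.mpr fun i => by simp [RCLike.ofReal_nonneg, Real.sqrt_nonneg]
  have := hD.mul_mul_conjTranspose_same (hA.1.eigenvectorUnitary : Matrix n n 𝕜)
  simpa [Matrix.star_eq_conjTranspose] using this

lemma psd_sqrt_mul_self {n 𝕜 : Type*} [Fintype n] [DecidableEq n] [RCLike 𝕜]
    {A : Matrix n n 𝕜} (hA : A.PosSemidef) : hA.sqrt * hA.sqrt = A := by
  unfold Matrix.PosSemidef.sqrt
  have hu : (star hA.1.eigenvectorUnitary : Matrix n n 𝕜) * hA.1.eigenvectorUnitary = 1 :=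
    Unitary.star_mul_self_of_mem hA.1.eigenvectorUnitary.2
  have hDD : diagonal ((RCLike.ofReal : ℝ → 𝕜) ∘ (√·) ∘ hA.1.eigenvalues) *
      diagonal ((RCLike.ofReal : ℝ → 𝕜) ∘ (√·) ∘ hA.1.eigenvalues) =
      diagonal ((RCLike.ofReal : ℝ → 𝕜) ∘ hA.1.eigenvalues) := by
    rw [diagonal_mul_diagonal]
    congr 1
    funext i
    simp only [Function.comp_apply]
    rw [← RCLike.ofReal_mul, Real.mul_self_sqrt (hA.eigenvalues_nonneg i)]
  calc _ = (hA.1.eigenvectorUnitary : Matrix n n 𝕜) *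
        (diagonal ((RCLike.ofReal : ℝ → 𝕜) ∘ (√·) ∘ hA.1.eigenvalues) *
        ((star hA.1.eigenvectorUnitary : Matrix n n 𝕜) * hA.1.eigenvectorUnitary) *
        diagonal ((RCLike.ofReal : ℝ → 𝕜) ∘ (√·) ∘ hA.1.eigenvalues)) *
        (star hA.1.eigenvectorUnitary : Matrix n n 𝕜) := by
          simp only [Matrix.mul_assoc]
    _ = A := by
          rw [hu, Matrix.mul_one, hDD]
          conv_rhs => rw [hA.1.spectral_theorem]
          simp [Unitary.conjStarAlgAut_apply]

/-- `K` is a Kraus representation of the linear map `Φ`. -/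
def IsKrausRep {d : ℕ} (Φ : Mat d →ₗ[ℂ] Mat d) {n : ℕ} (K : Fin n → Mat d) : Prop :=
  (∀ A, Φ A = ∑ i, K i * A * (K i)ᴴ) ∧ ∑ i, (K i)ᴴ * K i = 1

/-- A quantum channel: completely positive trace-preserving map, i.e. admitting a Kraus
representation with the normalization condition. -/
def IsCPTP {d : ℕ} (Φ : Mat d →ₗ[ℂ] Mat d) : Prop :=
  ∃ (n : ℕ) (K : Fin n → Mat d), IsKrausRep Φ K

/-- A density matrix: positive semidefinite with unit trace. -/
def IsDensity {d : ℕ} (ρ : Mat d) : Prop := ρ.PosSemidef ∧ ρ.trace = 1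

/-- Ergodicity: the channel has a unique fixed point density matrix. -/
def IsErgodic {d : ℕ} (Φ : Mat d →ₗ[ℂ] Mat d) : Prop :=
  ∃! ρ : Mat d, IsDensity ρ ∧ Φ ρ = ρ

/-- The support of an operator, viewed as a subspace of `ℂ^d`. -/
def supp {d : ℕ} (ρ : Mat d) : Submodule ℂ (Fin d → ℂ) := LinearMap.range ρ.mulVecLin

/-- The trace norm `‖A‖₁ = Tr √(A†A)`. -/
def traceNorm {d : ℕ} (A : Mat d) : ℝ :=
  ((Matrix.PosSemidef.sqrt (Matrix.posSemidef_conjTranspose_mul_self A)).trace).re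

/-- Mixing: iterates of the channel converge in trace norm to a unique state. -/
def IsMixing {d : ℕ} (Φ : Mat d →ₗ[ℂ] Mat d) : Prop :=
  ∃ ρs : Mat d, IsDensity ρs ∧ ∀ ρ : Mat d, IsDensity ρ →
    Filter.Tendsto (fun k : ℕ => traceNorm ((Φ ^ k) ρ - ρs)) Filter.atTop (nhds 0)

/-- A subspace `S` is invariant for a channel if every Kraus operator (of any Kraus
representation) maps `S` into itself. -/
def IsInvariantSubspace {d : ℕ} (Φ : Mat d →ₗ[ℂ] Mat d) (S : Submodule ℂ (Fin d → ℂ)) : Prop :=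
  ∀ (n : ℕ) (K : Fin n → Mat d), IsKrausRep Φ K → ∀ i, ∀ x ∈ S, (K i).mulVec x ∈ S

lemma traceCT {d : ℕ} (M : Mat d) :
    (Mᴴ * M).trace = ∑ j, ∑ k, star (M k j) * M k j := by
  simp [Matrix.trace, Matrix.mul_apply, Matrix.conjTranspose_apply, Matrix.diag]

lemma traceCT_nonneg {d : ℕ} (M : Mat d) : 0 ≤ (Mᴴ * M).trace := by
  rw [traceCT]
  exact Finset.sum_nonneg fun j _ => Finset.sum_nonneg fun k _ => star_mul_self_nonneg _

lemma eq_zero_of_traceCT {d : ℕ} (M : Mat d) (h : (Mᴴ * M).trace = 0) : M = 0 := by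
  rw [traceCT] at h
  ext k j
  have h1 := (Finset.sum_eq_zero_iff_of_nonneg
    (fun j _ => Finset.sum_nonneg fun k _ => star_mul_self_nonneg (M k j))).mp h j
    (Finset.mem_univ j)
  have h2 := (Finset.sum_eq_zero_iff_of_nonneg
    (fun k _ => star_mul_self_nonneg (M k j))).mp h1 k (Finset.mem_univ k)
  rcases mul_eq_zero.mp h2 with h3 | h3
  · simpa using congrArg star h3
  · simpa using h3

lemma trace_pres {d n : ℕ} (K : Fin n → Mat d) (hnorm : ∑ i, (K i)ᴴ * K i = 1)
    (X : Mat d) : ∑ i, (K i * X * (K i)ᴴ).trace = X.trace := by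
  have h : ∀ i, (K i * X * (K i)ᴴ).trace = ((K i)ᴴ * K i * X).trace := fun i =>
    Matrix.trace_mul_cycle _ _ _
  simp_rw [h, ← Matrix.trace_sum, ← Finset.sum_mul, hnorm, one_mul]


/-- Peripheral eigenvectors of quantum channels: `A = U|A|` (polar decomposition) satisfies
`Φ A = ω A` with `|ω| = 1` iff `|A|` is a fixed point of `Φ` and `Mᵢ U |A| = ω U Mᵢ |A|` for
every Kraus operator. -/
theorem peripheral_eigenvector_characterization {d n : ℕ} (Φ : Mat d →ₗ[ℂ] Mat d)
    (K : Fin n → Mat d) (hK : IsKrausRep Φ K)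
    (ω : ℂ) (hω : ‖ω‖ = 1) (A U absA : Mat d)
    (hU : U ∈ Matrix.unitaryGroup (Fin d) ℂ)
    (habs : absA = Matrix.PosSemidef.sqrt (Matrix.posSemidef_conjTranspose_mul_self A))
    (hpolar : A = U * absA) :
    Φ A = ω • A ↔ (Φ absA = absA ∧ ∀ i, K i * U * absA = ω • (U * (K i * absA))) := by
  obtain ⟨hKrep, hnorm⟩ := hK
  have hAbs : absA.PosSemidef :=
    habs ▸ psd_sqrt_posSemidef (Matrix.posSemidef_conjTranspose_mul_self A)
  have hU1 : Uᴴ * U = 1 := by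
    simpa [Matrix.star_eq_conjTranspose] using Matrix.mem_unitaryGroup_iff'.mp hU
  have hU2 : U * Uᴴ = 1 := by
    simpa [Matrix.star_eq_conjTranspose] using Matrix.mem_unitaryGroup_iff.mp hU
  have hU1' : ∀ C : Mat d, Uᴴ * (U * C) = C := fun C => by
    rw [← Matrix.mul_assoc, hU1, one_mul]
  have hU2' : ∀ C : Mat d, U * (Uᴴ * C) = C := fun C => by
    rw [← Matrix.mul_assoc, hU2, one_mul]
  have hωs : star ω * ω = 1 := by
    have h1 : Complex.normSq ω = 1 := by
      rw [Complex.normSq_eq_norm_sq, hω]; norm_num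
    rw [Complex.star_def, ← Complex.normSq_eq_conj_mul_self, h1, Complex.ofReal_one]
  have hωs' : ω * star ω = 1 := by rw [mul_comm]; exact hωs
  have hω0 : ω ≠ 0 := fun h => by simp [h] at hω
  constructor
  · intro hΦA
    rw [hKrep] at hΦA
    obtain ⟨B, hBH, hBB⟩ : ∃ B : Mat d, Bᴴ = B ∧ B * B = absA :=
      ⟨hAbs.sqrt, (psd_sqrt_posSemidef hAbs).1, psd_sqrt_mul_self hAbs⟩
    have hBB' : ∀ C : Mat d, B * (B * C) = absA * C := fun C => by
      rw [← Matrix.mul_assoc, hBB]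
    set x : Fin n → Mat d := fun i => B * Uᴴ * (K i)ᴴ * U with hxdef
    set y : Fin n → Mat d := fun i => B * (K i)ᴴ with hydef
    have hxH : ∀ i, (x i)ᴴ = Uᴴ * K i * U * B := by
      intro i
      simp [hxdef, Matrix.conjTranspose_mul, hBH, Matrix.mul_assoc]
    have hyH : ∀ i, (y i)ᴴ = K i * B := by
      intro i
      simp [hydef, Matrix.conjTranspose_mul, hBH]
    have htr : star absA.trace = absA.trace := by
      rw [← Matrix.trace_conjTranspose, hAbs.1]
    have S1 : ∑ i, ((x i)ᴴ * y i).trace = ω * absA.trace := by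
      have e : ∀ i, (x i)ᴴ * y i = Uᴴ * (K i * A * (K i)ᴴ) := by
        intro i
        rw [hpolar]
        simp only [hxdef, hydef, Matrix.conjTranspose_mul, Matrix.conjTranspose_conjTranspose,
          hBH, Matrix.mul_assoc, hBB']
      simp_rw [e]
      rw [← Matrix.trace_sum, ← Matrix.mul_sum, hΦA, Matrix.mul_smul, Matrix.trace_smul,
        smul_eq_mul, hpolar, ← Matrix.mul_assoc, hU1, one_mul]
    have S2 : ∑ i, ((x i)ᴴ * x i).trace = absA.trace := by
      have e : ∀ i, (x i)ᴴ * x i = Uᴴ * (K i * (U * absA * Uᴴ) * (K i)ᴴ) * U := by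
        intro i
        simp only [hxdef, Matrix.conjTranspose_mul, Matrix.conjTranspose_conjTranspose,
          hBH, Matrix.mul_assoc, hBB']
      have e' : ∀ i, ((x i)ᴴ * x i).trace = (K i * (U * absA * Uᴴ) * (K i)ᴴ).trace := by
        intro i
        rw [e i, Matrix.trace_mul_cycle, ← Matrix.mul_assoc, hU2, one_mul]
      simp_rw [e']
      rw [trace_pres K hnorm, Matrix.trace_mul_cycle, hU1, one_mul]
    have S3 : ∑ i, ((y i)ᴴ * y i).trace = absA.trace := by
      have e : ∀ i, (y i)ᴴ * y i = K i * absA * (K i)ᴴ := by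
        intro i
        simp only [hydef, Matrix.conjTranspose_mul, Matrix.conjTranspose_conjTranspose,
          hBH, Matrix.mul_assoc, hBB']
      simp_rw [e]
      exact trace_pres K hnorm absA
    have Sconj : ∑ i, ((y i)ᴴ * x i).trace = star ω * absA.trace := by
      have e : ∀ i, ((y i)ᴴ * x i).trace = star (((x i)ᴴ * y i).trace) := by
        intro i
        rw [← Matrix.trace_conjTranspose]
        congr 1
        simp [Matrix.conjTranspose_mul]
      simp_rw [e]
      have hsum : ∑ i, star (((x i)ᴴ * y i).trace) = star (∑ i, ((x i)ᴴ * y i).trace) := by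
        simp [Complex.star_def, map_sum]
      rw [hsum, S1, star_mul', htr]
    have hzero : ∑ i, ((y i - ω • x i)ᴴ * (y i - ω • x i)).trace = 0 := by
      have expand : ∀ i, ((y i - ω • x i)ᴴ * (y i - ω • x i)).trace
          = ((y i)ᴴ * y i).trace - ω * ((y i)ᴴ * x i).trace
            - star ω * ((x i)ᴴ * y i).trace + (star ω * ω) * ((x i)ᴴ * x i).trace := by
        intro i
        simp only [Matrix.conjTranspose_sub, Matrix.conjTranspose_smul, Matrix.sub_mul,
          Matrix.mul_sub, Matrix.smul_mul, Matrix.mul_smul, Matrix.trace_sub, Matrix.trace_smul,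
          smul_smul, smul_eq_mul]
        ring
      simp_rw [expand]
      rw [Finset.sum_add_distrib, Finset.sum_sub_distrib, Finset.sum_sub_distrib,
        ← Finset.mul_sum, ← Finset.mul_sum, ← Finset.mul_sum, S3, Sconj, S1, S2]
      linear_combination (-absA.trace) * hωs
    have hz : ∀ i, y i = ω • x i := by
      intro i
      have hnn : ∀ i ∈ Finset.univ, (0:ℂ) ≤ ((y i - ω • x i)ᴴ * (y i - ω • x i)).trace :=
        fun i _ => traceCT_nonneg _
      have h0 := (Finset.sum_eq_zero_iff_of_nonneg hnn).mp hzero i (Finset.mem_univ i)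
      have := eq_zero_of_traceCT _ h0
      rwa [sub_eq_zero] at this
    have hcomm' : ∀ i, K i * (U * absA) = ω • (U * (K i * absA)) := by
      intro i
      have hc := congrArg Matrix.conjTranspose (hz i)
      simp only [hydef, hxdef, Matrix.conjTranspose_mul, Matrix.conjTranspose_smul,
        Matrix.conjTranspose_conjTranspose, hBH, Matrix.mul_assoc] at hc
      -- hc : K i * B = star ω • (Uᴴ * (K i * (U * B)))
      have hc2 := congrArg (fun M => U * (M * B)) hc
      simp only [Matrix.smul_mul, Matrix.mul_smul, Matrix.mul_assoc, hBB', hU2'] at hc2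
      -- hc2 : U * (K i * absA) = star ω • (K i * (U * absA))
      have hc3 := congrArg (fun M => ω • M) hc2
      simp only [smul_smul, hωs', one_smul] at hc3
      rw [hBB] at hc3
      exact hc3.symm
    have hsum : ∑ i, K i * absA * (K i)ᴴ = absA := by
      have e : ∀ i, K i * A * (K i)ᴴ = ω • (U * (K i * absA * (K i)ᴴ)) := by
        intro i
        rw [hpolar, hcomm' i, Matrix.smul_mul]
        simp only [Matrix.mul_assoc]
      have h2 : ω • (U * ∑ i, K i * absA * (K i)ᴴ) = ω • (U * absA) := by
        rw [Matrix.mul_sum, Finset.smul_sum]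
        simp_rw [← e]
        rw [hΦA, hpolar]
      have h3 := smul_right_injective (Mat d) hω0 h2
      have h4 := congrArg (fun M => Uᴴ * M) h3
      simpa only [hU1'] using h4
    exact ⟨by rw [hKrep]; exact hsum, fun i => by rw [Matrix.mul_assoc]; exact hcomm' i⟩
  · rintro ⟨hfix, hcomm⟩
    have hcomm' : ∀ i, K i * (U * absA) = ω • (U * (K i * absA)) := fun i => by
      rw [← Matrix.mul_assoc]; exact hcomm i
    rw [hKrep, hpolar]
    calc ∑ i, K i * (U * absA) * (K i)ᴴ
        = ∑ i, ω • (U * (K i * absA * (K i)ᴴ)) := by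
          refine Finset.sum_congr rfl fun i _ => ?_
          rw [hcomm' i, Matrix.smul_mul]
          simp only [Matrix.mul_assoc]
      _ = ω • (U * ∑ i, K i * absA * (K i)ᴴ) := by
          rw [← Finset.smul_sum, ← Matrix.mul_sum]
      _ = ω • (U * absA) := by rw [← hKrep, hfix]
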